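/- If x is obtained from y by a uniform-on-the-right-and-left (URL) progressive transfer, then for every f in the class F satisfying f(t) ≤ t for all t ∈ [0,1], the extended Gini social welfare satisfies W_f(x) ≥ W_f(y). -/

import Mathlib

/-- `x` is obtained from `y` by a uniform-on-the-right-and-left (URL)
progressive transfer. -/
def URLTransfer {n : ℕ} (x y : Fin n → ℝ) : Prop :=
  Monotone x ∧ Monotone y ∧ (∑ i : Fin n, x i) / n = (∑ i : Fin n, y i) / n ∧
  ∃ δ ε : ℝ, 0 < δ ∧ 0 < ε ∧ ∃ h k : Fin n, h < k ∧
    (∀ i : Fin n, i ≤ h → x i = y i + δ) ∧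
    (∀ i : Fin n, h < i → i < k → x i = y i) ∧
    (∀ i : Fin n, k ≤ i → x i = y i - ε)

/-- Membership in the class F: `f : [0,1] → [0,1]` continuous, nondecreasing,
with `f 0 = 0` and `f 1 = 1`. -/
def MemF (f : ℝ → ℝ) : Prop :=
  ContinuousOn f (Set.Icc 0 1) ∧ MonotoneOn f (Set.Icc 0 1) ∧
  f 0 = 0 ∧ f 1 = 1 ∧ ∀ t ∈ Set.Icc (0 : ℝ) 1, f t ∈ Set.Icc (0 : ℝ) 1

/-- Extended Gini social welfare. -/
noncomputable def W {n : ℕ} (f : ℝ → ℝ) (z : Fin n → ℝ) : ℝ :=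
  ∑ i : Fin n, (f (((n : ℝ) - (i : ℕ)) / n) - f (((n : ℝ) - (i : ℕ) - 1) / n)) * z i

theorem stmt12 {n : ℕ} (hn : 2 ≤ n) (x y : Fin n → ℝ)
    (hURL : URLTransfer x y)
    (f : ℝ → ℝ) (hF : MemF f) (hbelow : ∀ t ∈ Set.Icc (0 : ℝ) 1, f t ≤ t) :
    W f x ≥ W f y := by
  obtain ⟨hxm, hym, hmean, δ, ε, hδ, hε, h, k, hhk, hx1, hx2, hx3⟩ := hURL
  obtain ⟨hfc, hfm, hf0, hf1, hfr⟩ := hF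
  have npos : 0 < n := lt_of_lt_of_le two_pos hn
  have Npos : (0:ℝ) < n := by exact_mod_cast npos
  set H := h.val with hHdef
  set K := k.val with hKdef
  have hHn : H < n := h.isLt
  have hKn : K < n := k.isLt
  have hHK : H < K := hhk
  set g : ℕ → ℝ := fun j => f (((n:ℝ) - j)/n) with hg
  set x' : ℕ → ℝ := fun j => if hj : j < n then x ⟨j, hj⟩ else 0 with hx'
  set y' : ℕ → ℝ := fun j => if hj : j < n then y ⟨j, hj⟩ else 0 with hy'
  -- rewrite W as range sums
  have cast1 : ∀ j : ℕ, ((n:ℝ) - j - 1)/n = ((n:ℝ) - (j+1 : ℕ))/n := by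
    intro j; push_cast; ring
  have hWx : W f x = ∑ j ∈ Finset.range n, (g j - g (j+1)) * x' j := by
    rw [← Fin.sum_univ_eq_sum_range (fun j => (g j - g (j+1)) * x' j) n]
    unfold W
    apply Finset.sum_congr rfl
    intro i _
    simp only [hg, hx', dif_pos i.isLt, Fin.eta, cast1 i.val]
  have hWy : W f y = ∑ j ∈ Finset.range n, (g j - g (j+1)) * y' j := by
    rw [← Fin.sum_univ_eq_sum_range (fun j => (g j - g (j+1)) * y' j) n]
    unfold W
    apply Finset.sum_congr rfl
    intro i _
    simp only [hg, hy', dif_pos i.isLt, Fin.eta, cast1 i.val]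
  -- piecewise values of x' - y'
  have d1 : ∀ j ∈ Finset.Ico 0 (H+1), x' j - y' j = δ := by
    intro j hj
    rw [Finset.mem_Ico] at hj
    have hjn : j < n := lt_of_lt_of_le hj.2 (Nat.succ_le_of_lt hHn)
    have : x ⟨j, hjn⟩ = y ⟨j, hjn⟩ + δ := hx1 ⟨j, hjn⟩ (by
      simp only [Fin.le_def]; exact Nat.lt_succ_iff.mp hj.2)
    simp [hx', hy', dif_pos hjn, this]
  have d2 : ∀ j ∈ Finset.Ico (H+1) K, x' j - y' j = 0 := by
    intro j hj
    rw [Finset.mem_Ico] at hj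
    have hjn : j < n := lt_trans hj.2 hKn
    have : x ⟨j, hjn⟩ = y ⟨j, hjn⟩ :=
      hx2 ⟨j, hjn⟩ (by simp only [Fin.lt_def]; exact Nat.lt_of_succ_le hj.1)
        (by simp only [Fin.lt_def]; exact hj.2)
    simp [hx', hy', dif_pos hjn, this]
  have d3 : ∀ j ∈ Finset.Ico K n, x' j - y' j = -ε := by
    intro j hj
    rw [Finset.mem_Ico] at hj
    have hjn : j < n := hj.2
    have : x ⟨j, hjn⟩ = y ⟨j, hjn⟩ - ε :=
      hx3 ⟨j, hjn⟩ (by simp only [Fin.le_def]; exact hj.1)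
    simp [hx', hy', dif_pos hjn, this]
  -- splitting lemma for any function
  have split : ∀ F : ℕ → ℝ, ∑ j ∈ Finset.range n, F j =
      ∑ j ∈ Finset.Ico 0 (H+1), F j + ∑ j ∈ Finset.Ico (H+1) K, F j
        + ∑ j ∈ Finset.Ico K n, F j := by
    intro F
    rw [Finset.range_eq_Ico,
      ← Finset.sum_Ico_consecutive F (Nat.zero_le K) (le_of_lt hKn),
      ← Finset.sum_Ico_consecutive F (Nat.zero_le (H+1)) (Nat.succ_le_of_lt hHK)]
  -- telescoping
  have tele : ∀ a b : ℕ, a ≤ b → ∑ j ∈ Finset.Ico a b, (g j - g (j+1)) = g a - g b := by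
    intro a b hab
    rw [Finset.sum_Ico_eq_sub _ hab, Finset.sum_range_sub' g, Finset.sum_range_sub' g]
    ring
  -- mean equality → (H+1)δ = (n-K)ε
  have hsum : (∑ i : Fin n, x i) = ∑ i : Fin n, y i := by
    field_simp at hmean
    exact hmean
  have hcount : ((H:ℝ)+1) * δ = ((n:ℝ) - K) * ε := by
    have hx0 : (∑ i : Fin n, x i) = ∑ j ∈ Finset.range n, x' j := by
      rw [← Fin.sum_univ_eq_sum_range (fun j => x' j) n]
      exact Finset.sum_congr rfl fun i _ => by simp [hx', dif_pos i.isLt]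
    have hy0 : (∑ i : Fin n, y i) = ∑ j ∈ Finset.range n, y' j := by
      rw [← Fin.sum_univ_eq_sum_range (fun j => y' j) n]
      exact Finset.sum_congr rfl fun i _ => by simp [hy', dif_pos i.isLt]
    have e : ∑ j ∈ Finset.range n, (x' j - y' j) = 0 := by
      rw [Finset.sum_sub_distrib, ← hx0, ← hy0, hsum]; ring
    rw [split (fun j => x' j - y' j), Finset.sum_congr rfl d1, Finset.sum_congr rfl d2,
      Finset.sum_congr rfl d3, Finset.sum_const, Finset.sum_const, Finset.sum_const,
      Nat.card_Ico, Nat.card_Ico, Nat.card_Ico] at e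
    simp only [nsmul_eq_mul, smul_eq_mul, mul_zero, smul_zero, Nat.sub_zero] at e
    have hKcast : ((n - K : ℕ) : ℝ) = (n:ℝ) - K := by
      rw [Nat.cast_sub (le_of_lt hKn)]
    push_cast [hKcast] at e ⊢
    linarith
  -- main difference
  have hmain : W f x - W f y = δ * (g 0 - g (H+1)) - ε * (g K - g n) := by
    rw [hWx, hWy, ← Finset.sum_sub_distrib]
    have : ∀ j ∈ Finset.range n, (g j - g (j+1)) * x' j - (g j - g (j+1)) * y' j
        = (g j - g (j+1)) * (x' j - y' j) := fun j _ => by ring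
    rw [Finset.sum_congr rfl this, split (fun j => (g j - g (j+1)) * (x' j - y' j))]
    have e1 : ∑ j ∈ Finset.Ico 0 (H+1), (g j - g (j+1)) * (x' j - y' j)
        = δ * (g 0 - g (H+1)) := by
      rw [Finset.sum_congr rfl (fun j hj => by rw [d1 j hj]), ← Finset.sum_mul,
        tele 0 (H+1) (Nat.zero_le _)]
      ring
    have e2 : ∑ j ∈ Finset.Ico (H+1) K, (g j - g (j+1)) * (x' j - y' j) = 0 := by
      rw [Finset.sum_congr rfl (fun j hj => by rw [d2 j hj])]
      simp
    have e3 : ∑ j ∈ Finset.Ico K n, (g j - g (j+1)) * (x' j - y' j)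
        = -ε * (g K - g n) := by
      rw [Finset.sum_congr rfl (fun j hj => by rw [d3 j hj]), ← Finset.sum_mul,
        tele K n (le_of_lt hKn)]
      ring
    rw [e1, e2, e3]; ring
  -- endpoint values
  have g0 : g 0 = 1 := by
    simp only [hg, Nat.cast_zero, sub_zero, div_self (ne_of_gt Npos)]
    exact hf1
  have gn : g n = 0 := by
    simp only [hg, sub_self, zero_div]
    exact hf0
  -- bounds
  have hIcc : ∀ m : ℕ, m ≤ n → ((n:ℝ) - m)/n ∈ Set.Icc (0:ℝ) 1 := by
    intro m hm
    have hm' : (m:ℝ) ≤ n := by exact_mod_cast hm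
    constructor
    · apply div_nonneg _ (le_of_lt Npos); linarith
    · rw [div_le_one Npos]; linarith [Nat.cast_nonneg (α := ℝ) m]
  have bH : g (H+1) ≤ ((n:ℝ) - (H+1))/n := by
    have := hbelow _ (hIcc (H+1) (Nat.succ_le_of_lt hHn))
    simpa [hg] using this
  have bK : g K ≤ ((n:ℝ) - K)/n := by
    have := hbelow _ (hIcc K (le_of_lt hKn))
    simpa [hg] using this
  -- finish
  have key : δ * (g 0 - g (H+1)) - ε * (g K - g n) ≥ 0 := by
    rw [g0, gn]
    have h1 : δ * (1 - g (H+1)) ≥ δ * (((H:ℝ)+1)/n) := by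
      apply mul_le_mul_of_nonneg_left _ (le_of_lt hδ)
      have : ((n:ℝ) - (H+1))/n = 1 - ((H:ℝ)+1)/n := by
        field_simp
      push_cast at bH
      linarith [bH, this ▸ bH]
    have h2 : ε * g K ≤ ε * (((n:ℝ) - K)/n) :=
      mul_le_mul_of_nonneg_left bK (le_of_lt hε)
    have h3 : δ * (((H:ℝ)+1)/n) = ε * (((n:ℝ) - K)/n) := by
      field_simp
      linarith [hcount]
    linarith
  linarith [hmain, key]
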